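/- Let X₁, X₂ be random variables and K₁, K₂ random variables on finite sets, with (K₁,K₂) independent of (X₁,X₂). Let φᵢ be deterministic maps and C̃ᵢ = φᵢ(Xᵢ) ⊕ ψᵢ(Kᵢ) in finite abelian groups G₁, G₂. Then I(C̃₁,C̃₂; X₁,X₂) ≤ log(|G₁||G₂|) − H(ψ₁(K₁), ψ₂(K₂)) = D(P_{ψ₁(K₁)ψ₂(K₂)} ‖ Uniform(G₁×G₂)). -/

import Mathlib

open Finset Real
open scoped Classical BigOperators

/-- Probability of an event under a weight function on a finite sample space. -/
noncomputable def pr {Ω : Type*} [Fintype Ω] (p : Ω → ℝ) (E : Ω → Prop) : ℝ :=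
  ∑ ω, if E ω then p ω else 0

/-- `p` is a probability mass function. -/
def IsPMF {Ω : Type*} [Fintype Ω] (p : Ω → ℝ) : Prop :=
  (∀ ω, 0 ≤ p ω) ∧ ∑ ω, p ω = 1

/-- Shannon entropy (in bits) of a random variable `X` on a finite space. -/
noncomputable def Hent {Ω α : Type*} [Fintype Ω] [Fintype α] (p : Ω → ℝ) (X : Ω → α) : ℝ :=
  -∑ a, pr p (fun ω => X ω = a) * Real.logb 2 (pr p (fun ω => X ω = a))

/-- Mutual information (in bits) between random variables `X` and `Y`. -/
noncomputable def MI {Ω α β : Type*} [Fintype Ω] [Fintype α] [Fintype β]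
    (p : Ω → ℝ) (X : Ω → α) (Y : Ω → β) : ℝ :=
  Hent p X + Hent p Y - Hent p (fun ω => (X ω, Y ω))

/-- Kullback–Leibler divergence (in bits) between distributions on a finite set. -/
noncomputable def KL {S : Type*} [Fintype S] (Q P : S → ℝ) : ℝ :=
  ∑ s, Q s * Real.logb 2 (Q s / P s)

section helpers
variable {Ω : Type*} [Fintype Ω]

lemma pr_nonneg (p : Ω → ℝ) (hp : ∀ ω, 0 ≤ p ω) (E : Ω → Prop) : 0 ≤ pr p E := by
  unfold pr
  exact Finset.sum_nonneg fun ω _ => by split <;> simp [hp ω]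

lemma pr_congr (p : Ω → ℝ) {E F : Ω → Prop} (h : ∀ ω, E ω ↔ F ω) : pr p E = pr p F := by
  unfold pr
  exact Finset.sum_congr rfl fun ω _ => by rw [h ω]

lemma pr_false (p : Ω → ℝ) {E : Ω → Prop} (h : ∀ ω, ¬ E ω) : pr p E = 0 := by
  unfold pr
  simp [h]

lemma pr_decomp {τ : Type*} [Fintype τ] (p : Ω → ℝ) (E : Ω → Prop) (T : Ω → τ) :
    pr p E = ∑ t, pr p (fun ω => E ω ∧ T ω = t) := by
  unfold pr
  rw [Finset.sum_comm]
  refine Finset.sum_congr rfl fun ω _ => ?_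
  by_cases h : E ω <;> simp [h]

lemma sum_pr_eq_one {τ : Type*} [Fintype τ] (p : Ω → ℝ) (hp : IsPMF p) (T : Ω → τ) :
    ∑ t, pr p (fun ω => T ω = t) = 1 := by
  have := pr_decomp p (fun _ => True) T
  simp only [true_and] at this
  rw [← this]
  unfold pr
  simpa using hp.2

end helpers
section helpers2
variable {Ω : Type*} [Fintype Ω]

lemma pr_ind_comp {A B G : Type*} [Fintype A] [Fintype B] [Fintype G]
    (p : Ω → ℝ) (X : Ω → A) (K : Ω → B) (ψ : B → G)
    (hind : ∀ x k, pr p (fun ω => X ω = x ∧ K ω = k)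
      = pr p (fun ω => X ω = x) * pr p (fun ω => K ω = k))
    (x : A) (g : G) :
    pr p (fun ω => X ω = x ∧ ψ (K ω) = g)
      = pr p (fun ω => X ω = x) * pr p (fun ω => ψ (K ω) = g) := by
  rw [pr_decomp p (fun ω => X ω = x ∧ ψ (K ω) = g) K,
      pr_decomp p (fun ω => ψ (K ω) = g) K, Finset.mul_sum]
  refine Finset.sum_congr rfl fun k _ => ?_
  by_cases h : ψ k = g
  · rw [pr_congr p (F := fun ω => X ω = x ∧ K ω = k)
      (fun ω => by constructor
                   · rintro ⟨⟨h1, _⟩, h2⟩; exact ⟨h1, h2⟩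
                   · rintro ⟨h1, h2⟩; exact ⟨⟨h1, h2 ▸ h⟩, h2⟩),
      pr_congr p (E := fun ω => ψ (K ω) = g ∧ K ω = k) (F := fun ω => K ω = k)
      (fun ω => by constructor
                   · rintro ⟨_, h2⟩; exact h2
                   · intro h2; exact ⟨h2 ▸ h, h2⟩)]
    exact hind x k
  · rw [pr_false p (E := fun ω => (X ω = x ∧ ψ (K ω) = g) ∧ K ω = k) (fun ω h' => h (h'.2 ▸ h'.1.2)),
      pr_false p (E := fun ω => ψ (K ω) = g ∧ K ω = k) (fun ω h' => h (h'.2 ▸ h'.1)),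
      mul_zero]

lemma qlogq_case (N : ℝ) (hN : 0 < N) {q : ℝ} (hq : 0 ≤ q) :
    q * Real.logb 2 (q * N) = q * Real.logb 2 q + q * Real.logb 2 N := by
  rcases eq_or_lt_of_le hq with h | h
  · simp [← h]
  · rw [Real.logb_mul (ne_of_gt h) (ne_of_gt hN), mul_add]

lemma maxent {S : Type*} [Fintype S] (q : S → ℝ) (h0 : ∀ s, 0 ≤ q s) (h1 : ∑ s, q s = 1) :
    -∑ s, q s * Real.logb 2 (q s) ≤ Real.logb 2 (Fintype.card S) := by
  have hcard : 0 < Fintype.card S := by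
    by_contra h
    have : Fintype.card S = 0 := by omega
    have : IsEmpty S := Fintype.card_eq_zero_iff.mp this
    simp [Finset.univ_eq_empty] at h1
  have hN : (0:ℝ) < (Fintype.card S : ℝ) := by exact_mod_cast hcard
  set N : ℝ := (Fintype.card S : ℝ)
  -- key: ∑ q * logb (q*N) ≥ 0
  have key : 0 ≤ ∑ s, q s * Real.logb 2 (q s * N) := by
    have keylog : 0 ≤ ∑ s, q s * Real.log (q s * N) := by
      have hterm : ∀ s, q s - N⁻¹ ≤ q s * Real.log (q s * N) := by
        intro s
        rcases eq_or_lt_of_le (h0 s) with h | h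
        · rw [← h, zero_mul, zero_sub]
          simp only [Left.neg_nonpos_iff]
          positivity
        · have hqN : 0 < q s * N := mul_pos h hN
          have h2 := Real.log_le_sub_one_of_pos (inv_pos.mpr hqN)
          rw [Real.log_inv] at h2
          have hlog : 1 - (q s * N)⁻¹ ≤ Real.log (q s * N) := by linarith
          have h3 := mul_le_mul_of_nonneg_left hlog (le_of_lt h)
          calc q s - N⁻¹ = q s * (1 - (q s * N)⁻¹) := by field_simp
            _ ≤ q s * Real.log (q s * N) := h3
      calc (0:ℝ) = 1 - N * N⁻¹ := by field_simp; ring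
        _ = ∑ s, (q s - N⁻¹) := by
            rw [Finset.sum_sub_distrib, h1, Finset.sum_const, Finset.card_univ,
              nsmul_eq_mul]
        _ ≤ _ := Finset.sum_le_sum fun s _ => hterm s
    have heq : ∑ s, q s * Real.logb 2 (q s * N)
        = (∑ s, q s * Real.log (q s * N)) / Real.log 2 := by
      rw [Finset.sum_div]
      exact Finset.sum_congr rfl fun s _ => by rw [Real.logb, mul_div_assoc]
    rw [heq]
    exact div_nonneg keylog (Real.log_nonneg one_le_two)
  have expand : ∑ s, q s * Real.logb 2 (q s * N)
      = ∑ s, q s * Real.logb 2 (q s) + Real.logb 2 N := by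
    rw [Finset.sum_congr rfl (fun s _ => qlogq_case N hN (h0 s)), Finset.sum_add_distrib,
      ← Finset.sum_mul, h1, one_mul]
  linarith [key, expand ▸ key]

end helpers2
section main
variable {Ω A B G : Type*} [Fintype Ω] [Fintype A] [Fintype B] [Fintype G] [AddCommGroup G]

lemma sum_decomp {A G : Type*} [Fintype A] [Fintype G] (r : A → ℝ) (q : G → ℝ)
    (hr0 : ∀ x, 0 ≤ r x) (hq0 : ∀ g, 0 ≤ q g) (hr1 : ∑ x, r x = 1) (hq1 : ∑ g, q g = 1) :
    ∑ x, ∑ g, r x * q g * Real.logb 2 (r x * q g)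
      = (∑ x, r x * Real.logb 2 (r x)) + (∑ g, q g * Real.logb 2 (q g)) := by
  have hterm : ∀ x g, r x * q g * Real.logb 2 (r x * q g)
      = q g * (r x * Real.logb 2 (r x)) + r x * (q g * Real.logb 2 (q g)) := by
    intro x g
    rcases eq_or_lt_of_le (hr0 x) with h | h
    · simp [← h]
    rcases eq_or_lt_of_le (hq0 g) with h' | h'
    · simp [← h']
    rw [Real.logb_mul (ne_of_gt h) (ne_of_gt h')]
    ring
  calc ∑ x, ∑ g, r x * q g * Real.logb 2 (r x * q g)
      = ∑ x, ((∑ g, q g) * (r x * Real.logb 2 (r x)) + r x * ∑ g, q g * Real.logb 2 (q g)) := by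
        refine Finset.sum_congr rfl fun x _ => ?_
        rw [Finset.sum_congr rfl (fun g _ => hterm x g), Finset.sum_add_distrib,
          ← Finset.sum_mul, ← Finset.mul_sum]
    _ = _ := by
        rw [hq1]
        simp only [one_mul]
        rw [Finset.sum_add_distrib, ← Finset.sum_mul, hr1, one_mul]

lemma hent_joint (p : Ω → ℝ) (hp : IsPMF p) (X : Ω → A) (K : Ω → B)
    (φ : A → G) (ψ : B → G)
    (hind : ∀ x k, pr p (fun ω => X ω = x ∧ K ω = k)
      = pr p (fun ω => X ω = x) * pr p (fun ω => K ω = k)) :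
    Hent p (fun ω => (φ (X ω) + ψ (K ω), X ω))
      = Hent p X + Hent p (fun ω => ψ (K ω)) := by
  have hjoint : ∀ (c : G) (x : A),
      pr p (fun ω => (φ (X ω) + ψ (K ω), X ω) = (c, x))
        = pr p (fun ω => X ω = x) * pr p (fun ω => ψ (K ω) = c - φ x) := by
    intro c x
    rw [pr_congr p (F := fun ω => X ω = x ∧ ψ (K ω) = c - φ x) (fun ω => by
      constructor
      · intro h
        rw [Prod.mk.injEq] at h
        obtain ⟨h1, h2⟩ := h
        exact ⟨h2, by rw [← h1, h2]; abel⟩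
      · rintro ⟨h1, h2⟩
        rw [Prod.mk.injEq]
        exact ⟨by rw [h1, h2]; abel, h1⟩)]
    exact pr_ind_comp p X K ψ hind x (c - φ x)
  unfold Hent
  rw [← neg_add, neg_inj, Fintype.sum_prod_type, Finset.sum_comm]
  have hinner : ∀ x : A, ∑ c : G,
      pr p (fun ω => (φ (X ω) + ψ (K ω), X ω) = (c, x)) *
        Real.logb 2 (pr p (fun ω => (φ (X ω) + ψ (K ω), X ω) = (c, x)))
      = ∑ g : G, pr p (fun ω => X ω = x) * pr p (fun ω => ψ (K ω) = g) *
        Real.logb 2 (pr p (fun ω => X ω = x) * pr p (fun ω => ψ (K ω) = g)) := by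
    intro x
    rw [Finset.sum_congr rfl (fun c _ => by rw [hjoint c x])]
    exact Equiv.sum_comp (Equiv.subRight (φ x)) (fun g =>
      pr p (fun ω => X ω = x) * pr p (fun ω => ψ (K ω) = g) *
        Real.logb 2 (pr p (fun ω => X ω = x) * pr p (fun ω => ψ (K ω) = g)))
  rw [Finset.sum_congr rfl (fun x _ => hinner x)]
  exact sum_decomp _ _ (fun x => pr_nonneg p hp.1 _) (fun g => pr_nonneg p hp.1 _)
    (sum_pr_eq_one p hp X) (sum_pr_eq_one p hp _)

theorem main_ineq (p : Ω → ℝ) (hp : IsPMF p) (X : Ω → A) (K : Ω → B)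
    (φ : A → G) (ψ : B → G)
    (hind : ∀ x k, pr p (fun ω => X ω = x ∧ K ω = k)
      = pr p (fun ω => X ω = x) * pr p (fun ω => K ω = k)) :
    MI p (fun ω => φ (X ω) + ψ (K ω)) X
      ≤ Real.logb 2 (Fintype.card G) - Hent p (fun ω => ψ (K ω)) := by
  unfold MI
  rw [hent_joint p hp X K φ ψ hind]
  have hmax : Hent p (fun ω => φ (X ω) + ψ (K ω)) ≤ Real.logb 2 (Fintype.card G) := by
    have := maxent (fun c => pr p (fun ω => φ (X ω) + ψ (K ω) = c))
      (fun c => pr_nonneg p hp.1 _) (sum_pr_eq_one p hp _)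
    unfold Hent
    exact this
  linarith

theorem kl_eq {S : Type*} [Fintype S] (q : S → ℝ)
    (h0 : ∀ s, 0 ≤ q s) (h1 : ∑ s, q s = 1) (hc : 0 < Fintype.card S) :
    Real.logb 2 (Fintype.card S) - (-∑ s, q s * Real.logb 2 (q s))
      = KL q (fun _ => ((Fintype.card S : ℝ))⁻¹) := by
  have hN : (0:ℝ) < (Fintype.card S : ℝ) := by exact_mod_cast hc
  unfold KL
  have hterm : ∀ s, q s * Real.logb 2 (q s / ((Fintype.card S : ℝ))⁻¹)
      = q s * Real.logb 2 (q s) + q s * Real.logb 2 (Fintype.card S) := by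
    intro s
    rw [div_eq_mul_inv, inv_inv]
    exact qlogq_case _ hN (h0 s)
  rw [Finset.sum_congr rfl (fun s _ => hterm s), Finset.sum_add_distrib,
    ← Finset.sum_mul, h1, one_mul]
  ring

end main

/-- for C̃ᵢ = φᵢ(Xᵢ) ⊕ ψᵢ(Kᵢ) with (X₁,X₂) ⟂ (K₁,K₂),
I(C̃₁,C̃₂; X₁,X₂) ≤ log(|G₁||G₂|) − H(ψ₁(K₁),ψ₂(K₂)) = D(P_{ψ₁(K₁)ψ₂(K₂)} ‖ Unif). -/
theorem stmt19 {Ω α₁ α₂ β₁ β₂ G₁ G₂ : Type*} [Fintype Ω] [Fintype α₁] [Fintype α₂]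
    [Fintype β₁] [Fintype β₂] [Fintype G₁] [Fintype G₂]
    [AddCommGroup G₁] [AddCommGroup G₂]
    (p : Ω → ℝ) (hp : IsPMF p)
    (X₁ : Ω → α₁) (X₂ : Ω → α₂) (K₁ : Ω → β₁) (K₂ : Ω → β₂)
    (φ₁ : α₁ → G₁) (φ₂ : α₂ → G₂) (ψ₁ : β₁ → G₁) (ψ₂ : β₂ → G₂)
    (hind : ∀ (x : α₁ × α₂) (k : β₁ × β₂),
      pr p (fun ω => (X₁ ω, X₂ ω) = x ∧ (K₁ ω, K₂ ω) = k)
        = pr p (fun ω => (X₁ ω, X₂ ω) = x) * pr p (fun ω => (K₁ ω, K₂ ω) = k)) :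
    MI p (fun ω => (φ₁ (X₁ ω) + ψ₁ (K₁ ω), φ₂ (X₂ ω) + ψ₂ (K₂ ω)))
        (fun ω => (X₁ ω, X₂ ω))
      ≤ Real.logb 2 ((Fintype.card G₁ : ℝ) * (Fintype.card G₂ : ℝ))
        - Hent p (fun ω => (ψ₁ (K₁ ω), ψ₂ (K₂ ω)))
    ∧ Real.logb 2 ((Fintype.card G₁ : ℝ) * (Fintype.card G₂ : ℝ))
        - Hent p (fun ω => (ψ₁ (K₁ ω), ψ₂ (K₂ ω)))
      = KL (fun g : G₁ × G₂ => pr p (fun ω => (ψ₁ (K₁ ω), ψ₂ (K₂ ω)) = g))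
          (fun _ : G₁ × G₂ => ((Fintype.card G₁ : ℝ) * (Fintype.card G₂ : ℝ))⁻¹) := by
  have hcard : ((Fintype.card (G₁ × G₂) : ℝ)) = (Fintype.card G₁ : ℝ) * (Fintype.card G₂ : ℝ) := by
    rw [Fintype.card_prod]; push_cast; ring
  constructor
  · rw [← hcard]
    exact main_ineq p hp (fun ω => (X₁ ω, X₂ ω)) (fun ω => (K₁ ω, K₂ ω))
      (fun x => (φ₁ x.1, φ₂ x.2)) (fun k => (ψ₁ k.1, ψ₂ k.2)) hind
  · rw [← hcard]
    exact kl_eq (fun g : G₁ × G₂ => pr p (fun ω => (ψ₁ (K₁ ω), ψ₂ (K₂ ω)) = g))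
      (fun g => pr_nonneg p hp.1 _) (sum_pr_eq_one p hp _) Fintype.card_pos
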